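/- Let d ∈ ℕ and δ ∈ (0, π/2), and suppose N_{d,δ} > 0. Define F_{d,δ}(x) = ∫_{−π}^{π} M_{d,δ}(x') H(x − x') dx'. Then for every x ∈ ℝ with δ ≤ |x| ≤ π − δ, one has |F_{d,δ}(x) − H(x)| ≤ 4π / N_{d,δ}. -/
import Mathlib


open Real Classical

/-- The 2π-periodic Heaviside function: `H(x) = 1` for `x ∈ [2kπ, (2k+1)π)` and
`H(x) = 0` for `x ∈ [(2k−1)π, 2kπ)`, `k ∈ ℤ`. -/
noncomputable def Hper (x : ℝ) : ℝ :=
  if ∃ k : ℤ, 2 * k * π ≤ x ∧ x < (2 * k + 1) * π then 1 else 0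

/-- `g_{d,δ}(x) = T_d(1 + 2(cos x − cos δ)/(1 + cos δ))`. -/
noncomputable def chebG (d : ℕ) (δ x : ℝ) : ℝ :=
  (Polynomial.Chebyshev.T ℝ d).eval (1 + 2 * (Real.cos x - Real.cos δ) / (1 + Real.cos δ))

/-- `N_{d,δ} = ∫_{−π}^{π} g_{d,δ}(x) dx`. -/
noncomputable def chebN (d : ℕ) (δ : ℝ) : ℝ := ∫ x in (-π)..π, chebG d δ x

/-- `M_{d,δ} = g_{d,δ}/N_{d,δ}`. -/
noncomputable def chebM (d : ℕ) (δ x : ℝ) : ℝ := chebG d δ x / chebN d δ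

lemma Hper_eq_one {y : ℝ} (h0 : 0 ≤ y) (h1 : y < π) : Hper y = 1 := by
  refine if_pos ⟨0, ?_, ?_⟩ <;> push_cast <;> simpa

lemma Hper_eq_zero {y : ℝ} (h0 : -π ≤ y) (h1 : y < 0) : Hper y = 0 := by
  have hπ := pi_pos
  refine if_neg ?_
  rintro ⟨k, hk1, hk2⟩
  have hk0 : k < 0 := by
    by_contra h
    push_neg at h
    have : (0:ℝ) ≤ (k:ℝ) := by exact_mod_cast h
    nlinarith
  have hk1' : (k:ℝ) ≤ -1 := by exact_mod_cast (show k ≤ -1 by omega)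
  nlinarith

lemma Hper_mem (y : ℝ) : Hper y = 0 ∨ Hper y = 1 := by
  unfold Hper; split <;> simp

lemma measurable_Hper : Measurable Hper := by
  unfold Hper
  have hS : MeasurableSet {x : ℝ | ∃ k : ℤ, 2 * k * π ≤ x ∧ x < (2 * k + 1) * π} := by
    have h : {x : ℝ | ∃ k : ℤ, 2 * (k:ℝ) * π ≤ x ∧ x < (2 * (k:ℝ) + 1) * π}
        = ⋃ k : ℤ, Set.Ico (2 * (k:ℝ) * π) ((2 * (k:ℝ) + 1) * π) := by
      ext y; simp [Set.mem_Ico]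
    rw [h]
    exact MeasurableSet.iUnion fun k => measurableSet_Ico
  exact Measurable.ite hS measurable_const measurable_const

lemma continuous_chebG (d : ℕ) (δ : ℝ) : Continuous (chebG d δ) := by
  unfold chebG
  exact (Polynomial.continuous _).comp (by fun_prop)

lemma abs_chebG_le (d : ℕ) {δ x : ℝ} (hδ0 : 0 < δ) (hδ2 : δ < π / 2)
    (h1 : δ ≤ |x|) (h2 : |x| ≤ π) : |chebG d δ x| ≤ 1 := by
  have hπ := pi_pos
  have hcosδ : 0 < Real.cos δ := Real.cos_pos_of_mem_Ioo ⟨by linarith, hδ2⟩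
  have hden : 0 < 1 + Real.cos δ := by linarith
  have hc1 : Real.cos x ≤ Real.cos δ := by
    rw [← Real.cos_abs x]
    exact Real.cos_le_cos_of_nonneg_of_le_pi hδ0.le h2 h1
  have hc2 : -1 ≤ Real.cos x := Real.neg_one_le_cos x
  set u : ℝ := 1 + 2 * (Real.cos x - Real.cos δ) / (1 + Real.cos δ) with hu
  have hu1 : -1 ≤ u := by
    have h : (-2 : ℝ) ≤ 2 * (Real.cos x - Real.cos δ) / (1 + Real.cos δ) := by
      rw [le_div_iff₀ hden]; nlinarith
    rw [hu]; linarith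
  have hu2 : u ≤ 1 := by
    have h : 2 * (Real.cos x - Real.cos δ) / (1 + Real.cos δ) ≤ 0 :=
      div_nonpos_of_nonpos_of_nonneg (by linarith) hden.le
    rw [hu]; linarith
  have hT := Polynomial.Chebyshev.T_real_cos (Real.arccos u) d
  rw [Real.cos_arccos hu1 hu2] at hT
  have : chebG d δ x = Real.cos ((d : ℤ) * Real.arccos u) := by rw [chebG, ← hu, hT]
  rw [this]
  exact Real.abs_cos_le_one _

theorem stmt_5 (d : ℕ) (δ : ℝ) (hδ : δ ∈ Set.Ioo 0 (π / 2)) (hN : 0 < chebN d δ)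
    (x : ℝ) (hx1 : δ ≤ |x|) (hx2 : |x| ≤ π - δ) :
    |(∫ x' in (-π)..π, chebM d δ x' * Hper (x - x')) - Hper x| ≤ 4 * π / chebN d δ := by
  obtain ⟨hδ0, hδ2⟩ := hδ
  have hπ := pi_pos
  have hNne : chebN d δ ≠ 0 := hN.ne'
  -- integrability
  have hMcont : Continuous (chebM d δ) := (continuous_chebG d δ).div_const _
  have hMint : IntervalIntegrable (chebM d δ) MeasureTheory.volume (-π) π :=
    hMcont.intervalIntegrable _ _
  have hfmeas : MeasureTheory.AEStronglyMeasurable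
      (fun x' => chebM d δ x' * Hper (x - x'))
      (MeasureTheory.volume.restrict (Set.uIoc (-π) π)) :=
    (hMcont.aestronglyMeasurable.restrict.mul
      ((measurable_Hper.comp (measurable_const.sub measurable_id)).aestronglyMeasurable.restrict))
  have habsH : ∀ y, |Hper y| ≤ 1 := by
    intro y; rcases Hper_mem y with h | h <;> rw [h] <;> norm_num
  have hfint : IntervalIntegrable (fun x' => chebM d δ x' * Hper (x - x'))
      MeasureTheory.volume (-π) π := by
    refine hMint.mono_fun hfmeas (Filter.Eventually.of_forall fun y => ?_)
    simp only [norm_mul, Real.norm_eq_abs]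
    calc |chebM d δ y| * |Hper (x - y)| ≤ |chebM d δ y| * 1 :=
          mul_le_mul_of_nonneg_left (habsH _) (abs_nonneg _)
      _ = |chebM d δ y| := mul_one _
  -- total mass 1
  have hmass : (∫ x' in (-π)..π, chebM d δ x') = 1 := by
    unfold chebM
    rw [intervalIntegral.integral_div]
    exact div_self hNne
  -- rewrite the difference
  have key : (∫ x' in (-π)..π, chebM d δ x' * Hper (x - x')) - Hper x
      = ∫ x' in (-π)..π, chebM d δ x' * (Hper (x - x') - Hper x) := by
    have h2 : (∫ x' in (-π)..π, chebM d δ x' * Hper x) = Hper x := by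
      rw [intervalIntegral.integral_mul_const, hmass, one_mul]
    rw [show (fun x' => chebM d δ x' * (Hper (x - x') - Hper x))
        = fun x' => chebM d δ x' * Hper (x - x') - chebM d δ x' * Hper x by
      funext x'; ring]
    rw [intervalIntegral.integral_sub hfint (hMint.mul_const _), h2]
  rw [key, ← Real.norm_eq_abs]
  -- pointwise bound on Ι (-π) π
  have hbound : ∀ x' ∈ Set.uIoc (-π) π,
      ‖chebM d δ x' * (Hper (x - x') - Hper x)‖ ≤ 1 / chebN d δ := by
    intro x' hx'
    rw [Set.uIoc_of_le (by linarith : -π ≤ π)] at hx'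
    have hx'abs : |x'| ≤ π := abs_le.2 ⟨hx'.1.le, hx'.2⟩
    by_cases hcase : |x'| < δ
    · -- Hper (x - x') = Hper x
      have hHH : Hper (x - x') = Hper x := by
        have hx'1 : -δ < x' := by cases abs_lt.1 hcase; linarith
        have hx'2 : x' < δ := (abs_lt.1 hcase).2
        rcases le_or_gt 0 x with hx0 | hx0
        · have hxa : |x| = x := abs_of_nonneg hx0
          rw [hxa] at hx1 hx2
          rw [Hper_eq_one (by linarith) (by linarith),
            Hper_eq_one (by linarith) (by linarith)]
        · have hxa : |x| = -x := abs_of_neg hx0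
          rw [hxa] at hx1 hx2
          rw [Hper_eq_zero (by linarith) (by linarith),
            Hper_eq_zero (by linarith) (by linarith)]
      rw [hHH]
      simp only [sub_self, mul_zero, norm_zero]
      positivity
    · push_neg at hcase
      have hg : |chebG d δ x'| ≤ 1 := abs_chebG_le d hδ0 hδ2 hcase hx'abs
      have hM : |chebM d δ x'| ≤ 1 / chebN d δ := by
        rw [chebM, abs_div, abs_of_pos hN]
        gcongr
      have hHd : |Hper (x - x') - Hper x| ≤ 1 := by
        rcases Hper_mem (x - x') with h1 | h1 <;> rcases Hper_mem x with h2 | h2 <;>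
          rw [h1, h2] <;> norm_num
      rw [norm_mul, Real.norm_eq_abs, Real.norm_eq_abs]
      calc |chebM d δ x'| * |Hper (x - x') - Hper x| ≤ (1 / chebN d δ) * 1 :=
            mul_le_mul hM hHd (abs_nonneg _) (by positivity)
        _ = 1 / chebN d δ := mul_one _
  have := intervalIntegral.norm_integral_le_of_norm_le_const hbound
  have habs : |π - (-π)| = 2 * π := by rw [abs_of_pos (by linarith)]; ring
  rw [habs] at this
  calc ‖∫ x' in (-π)..π, chebM d δ x' * (Hper (x - x') - Hper x)‖
      ≤ 1 / chebN d δ * (2 * π) := this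
    _ ≤ 4 * π / chebN d δ := by
        rw [div_mul_eq_mul_div, one_mul, div_le_div_iff₀ hN hN]
        nlinarith
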